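/- Let K be a field of characteristic p > 0 and let G = ⟨a1⟩ × ⟨a2⟩ × ... × ⟨as⟩ be a finite abelian p-group written as a direct product of cyclic groups with ⟨ai⟩ of order q_i. Then the set B = { (a1 - 1)^{n1} (a2 - 1)^{n2} ⋯ (as - 1)^{ns} : 0 ≤ n_i < q_i } is a filtered multiplicative K-basis of the group algebra KG. -/

import Mathlib

/-- The Jacobson radical of a ring, as an ideal. -/
def ringRad (A : Type*) [Ring A] : Ideal A := (⊥ : Ideal A).jacobson

/-- `B` is a filtered multiplicative `K`-basis of the `K`-algebra `A`:
it is a `K`-basis, products of basis elements are `0` or again basis elements,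
and `B ∩ rad A` is a `K`-basis of the Jacobson radical `rad A`. -/
def IsFilteredMulBasis (K : Type*) {A : Type*} [Field K] [Ring A] [Algebra K A]
    (B : Set A) : Prop :=
  LinearIndependent K ((↑) : B → A) ∧ Submodule.span K B = ⊤ ∧
  (∀ b₁ ∈ B, ∀ b₂ ∈ B, b₁ * b₂ = 0 ∨ b₁ * b₂ ∈ B) ∧
  LinearIndependent K ((↑) : ↥(B ∩ (ringRad A : Set A)) → A) ∧
  Submodule.span K (B ∩ (ringRad A : Set A)) = Submodule.restrictScalars K (ringRad A)

section Aux

variable {K : Type*} [Field K] {p : ℕ} [Fact p.Prime] [CharP K p]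
  {G : Type*} [CommGroup G]

lemma aux_charP : CharP (MonoidAlgebra K G) p :=
  charP_of_injective_ringHom (f := algebraMap K (MonoidAlgebra K G)) (algebraMap K _).injective p

lemma aux_pow_order (a : G) (e : ℕ) (h : orderOf a = p ^ e) :
    (MonoidAlgebra.of K G a - 1) ^ (p ^ e) = 0 := by
  haveI : CharP (MonoidAlgebra K G) p := aux_charP
  rw [sub_pow_char_pow, ← map_pow, ← h, pow_orderOf_eq_one, one_pow]
  rw [map_one, sub_self]

lemma aux_nilpotent_mem_rad {A : Type*} [CommRing A] {x : A} (hx : IsNilpotent x) :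
    x ∈ ringRad A := by
  show x ∈ (⊥ : Ideal A).jacobson
  rw [Ideal.mem_jacobson_bot]
  intro y
  exact IsNilpotent.isUnit_add_one ((Commute.all x y).isNilpotent_mul_right hx)

lemma aux_one_not_mem_rad {A : Type*} [CommRing A] [Nontrivial A] :
    (1 : A) ∉ ringRad A := by
  intro h
  rw [show ringRad A = (⊥ : Ideal A).jacobson from rfl, Ideal.mem_jacobson_bot] at h
  have := h (-1)
  simp only [one_mul, neg_add_cancel] at this
  exact not_isUnit_zero this

end Aux

theorem stmt_3 {K : Type*} [Field K] {p : ℕ} [Fact p.Prime] [CharP K p]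
    {G : Type*} [CommGroup G] [Finite G]
    (s : ℕ) (q : Fin s → ℕ) (e : Fin s → ℕ) (hq : ∀ i, q i = p ^ e i)
    (a : Fin s → G) (horder : ∀ i, orderOf (a i) = q i)
    (hdirect : ∀ g : G, ∃! n : Fin s → ℕ, (∀ i, n i < q i) ∧ g = ∏ i, a i ^ n i) :
    IsFilteredMulBasis K
      {x : MonoidAlgebra K G | ∃ n : Fin s → ℕ, (∀ i, n i < q i) ∧
        x = ∏ i, (MonoidAlgebra.of K G (a i) - 1) ^ n i} := by
  classical
  haveI : Fintype G := Fintype.ofFinite G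
  set A := MonoidAlgebra K G with hA
  have hq0 : ∀ i, 0 < q i := fun i => (hq i) ▸ pow_pos (Fact.out : p.Prime).pos _
  -- the basic elements
  set P : (Fin s → ℕ) → A := fun n => ∏ i, (MonoidAlgebra.of K G (a i) - 1) ^ n i with hP
  -- vanishing of high powers
  have hzero : ∀ i m, q i ≤ m → (MonoidAlgebra.of K G (a i) - 1) ^ m = 0 := by
    intro i m hm
    have h1 : (MonoidAlgebra.of K G (a i) - 1) ^ q i = 0 := by
      rw [hq i]
      exact aux_pow_order (a i) (e i) (by rw [horder i, hq i])
    calc (MonoidAlgebra.of K G (a i) - 1) ^ m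
        = (MonoidAlgebra.of K G (a i) - 1) ^ q i *
          (MonoidAlgebra.of K G (a i) - 1) ^ (m - q i) := by
          rw [← pow_add, Nat.add_sub_cancel' hm]
      _ = 0 := by rw [h1, zero_mul]
  set ι := ∀ i : Fin s, Fin (q i) with hι
  set F : ι → A := fun n => P (fun i => (n i : ℕ)) with hF
  -- the set B is the range of F
  have hBF : {x : MonoidAlgebra K G | ∃ n : Fin s → ℕ, (∀ i, n i < q i) ∧
      x = ∏ i, (MonoidAlgebra.of K G (a i) - 1) ^ n i} = Set.range F := by
    ext y
    constructor
    · rintro ⟨n, hn, rfl⟩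
      exact ⟨fun i => ⟨n i, hn i⟩, rfl⟩
    · rintro ⟨n, rfl⟩
      exact ⟨fun i => (n i : ℕ), fun i => (n i).2, rfl⟩
  -- every P n is zero or in the range of F
  have hP0 : ∀ n : Fin s → ℕ, (∃ m : ι, P n = F m) ∨ P n = 0 := by
    intro n
    by_cases h : ∀ i, n i < q i
    · exact Or.inl ⟨fun i => ⟨n i, h i⟩, rfl⟩
    · push_neg at h
      obtain ⟨i, hi⟩ := h
      exact Or.inr (Finset.prod_eq_zero (Finset.mem_univ i) (hzero i _ hi))
  set S := Submodule.span K (Set.range F) with hS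
  have hPmem : ∀ n, P n ∈ S := by
    intro n
    rcases hP0 n with ⟨m, hm⟩ | h
    · rw [hm]; exact Submodule.subset_span ⟨m, rfl⟩
    · rw [h]; exact S.zero_mem
  -- multiplying P n by (of (a j) - 1) gives another P
  have hmulx : ∀ (n : Fin s → ℕ) (j : Fin s),
      P n * (MonoidAlgebra.of K G (a j) - 1) = P (fun i => if i = j then n i + 1 else n i) := by
    intro n j
    rw [hP]
    simp only
    have : ∀ i ∈ Finset.univ, (MonoidAlgebra.of K G (a i) - 1) ^ (if i = j then n i + 1 else n i)
        = (MonoidAlgebra.of K G (a i) - 1) ^ n i *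
          (if i = j then MonoidAlgebra.of K G (a i) - 1 else 1) := by
      intro i _
      by_cases h : i = j
      · simp [h, pow_succ]
      · simp [h]
    rw [Finset.prod_congr rfl this, Finset.prod_mul_distrib, Finset.prod_ite_eq']
    simp
  -- one is in S
  have hone : (1 : A) ∈ S := by
    have : F (fun i => ⟨0, hq0 i⟩) = 1 := by
      rw [hF]; simp [hP]
    rw [← this]
    exact Submodule.subset_span ⟨_, rfl⟩
  -- S is closed under multiplication by of (a j)
  have hmulS : ∀ (j : Fin s), ∀ y ∈ S, y * MonoidAlgebra.of K G (a j) ∈ S := by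
    intro j y hy
    induction hy using Submodule.span_induction with
    | mem z hz =>
      obtain ⟨m, rfl⟩ := hz
      have h1 : F m * MonoidAlgebra.of K G (a j)
          = P (fun i => (m i : ℕ)) * (MonoidAlgebra.of K G (a j) - 1) + F m := by
        rw [hF]; ring
      rw [h1, hmulx]
      exact S.add_mem (hPmem _) (Submodule.subset_span ⟨m, rfl⟩)
    | zero => simpa using S.zero_mem
    | add z w _ _ hz hw => rw [add_mul]; exact S.add_mem hz hw
    | smul c z _ hz => rw [smul_mul_assoc]; exact S.smul_mem c hz
  -- the set of elements multiplying S into S is a submonoid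
  set M : Submonoid A :=
    { carrier := {z | ∀ y ∈ S, y * z ∈ S}
      one_mem' := fun y hy => by simpa using hy
      mul_mem' := fun {z1 z2} h1 h2 y hy => by
        rw [← mul_assoc]; exact h2 _ (h1 _ hy) } with hM
  have hofM : ∀ g : G, MonoidAlgebra.of K G g ∈ M := by
    intro g
    obtain ⟨n, ⟨hn, rfl⟩, -⟩ := hdirect g
    have : MonoidAlgebra.of K G (∏ i, a i ^ n i) = ∏ i, (MonoidAlgebra.of K G (a i)) ^ n i := by
      rw [map_prod]; simp [map_pow]
    rw [this]
    exact prod_mem (fun i _ => pow_mem (show MonoidAlgebra.of K G (a i) ∈ M from fun y hy => hmulS i y hy) _)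
  have hofS : ∀ g : G, MonoidAlgebra.of K G g ∈ S := by
    intro g
    have := hofM g 1 hone
    simpa using this
  -- S is everything
  have hspan : S = ⊤ := by
    rw [eq_top_iff]
    intro z hz
    clear hz
    induction z using MonoidAlgebra.induction_on with
    | of g => exact hofS g
    | add f g hf hg => exact S.add_mem hf hg
    | smul c f hf => exact S.smul_mem c hf
  -- cardinality computation
  have hbij : Function.Bijective (fun n : ι => ∏ i, a i ^ (n i : ℕ)) := by
    constructor
    · intro n m hnm
      obtain ⟨u, -, huniq⟩ := hdirect (∏ i, a i ^ (m i : ℕ))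
      have h1 : (fun i => (n i : ℕ)) = u := huniq _ ⟨fun i => (n i).2, hnm.symm⟩
      have h2 : (fun i => (m i : ℕ)) = u := huniq _ ⟨fun i => (m i).2, rfl⟩
      funext i
      exact Fin.ext (by rw [← h2] at h1; exact congrFun h1 i)
    · intro g
      obtain ⟨u, ⟨hu1, hu2⟩, -⟩ := hdirect g
      exact ⟨fun i => ⟨u i, hu1 i⟩, hu2.symm⟩
  have hcard : Fintype.card ι = Fintype.card G := Fintype.card_congr (Equiv.ofBijective _ hbij)
  have hrank : Module.finrank K A = Fintype.card G :=
    Module.finrank_eq_card_basis (MonoidAlgebra.basis G K : Module.Basis G K A)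
  -- linear independence
  have hLI : LinearIndependent K F :=
    linearIndependent_of_top_le_span_of_card_eq_finrank (le_of_eq hspan.symm)
      (by rw [hrank, hcard])
  have hFinj : Function.Injective F := hLI.injective
  set rad := ringRad A with hrad
  -- elements with nonzero exponent vector are in the radical
  set n₀ : ι := fun i => ⟨0, hq0 i⟩ with hn₀
  have hF1 : F n₀ = 1 := by rw [hF]; simp [hP, hn₀]
  have hmemrad : ∀ n : ι, n ≠ n₀ → F n ∈ rad := by
    intro n hn
    apply aux_nilpotent_mem_rad
    have : ∃ i, (n i : ℕ) ≠ 0 := by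
      by_contra h
      push_neg at h
      exact hn (funext fun i => Fin.ext (h i))
    obtain ⟨i, hi⟩ := this
    refine ⟨q i, ?_⟩
    rw [hF]
    simp only [hP]
    rw [← Finset.prod_pow]
    apply Finset.prod_eq_zero (Finset.mem_univ i)
    rw [← pow_mul]
    exact hzero i _ (Nat.le_mul_of_pos_left _ (Nat.pos_of_ne_zero hi))
  have hone_nrad : (1 : A) ∉ rad := aux_one_not_mem_rad
  -- identify B ∩ rad
  have hBinter : {x : MonoidAlgebra K G | ∃ n : Fin s → ℕ, (∀ i, n i < q i) ∧
      x = ∏ i, (MonoidAlgebra.of K G (a i) - 1) ^ n i} ∩ (rad : Set A)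
      = F '' {n : ι | n ≠ n₀} := by
    rw [hBF]
    ext y
    constructor
    · rintro ⟨⟨n, rfl⟩, hyr⟩
      refine ⟨n, ?_, rfl⟩
      intro h
      rw [h, hF1] at hyr
      exact hone_nrad hyr
    · rintro ⟨n, hn, rfl⟩
      exact ⟨⟨n, rfl⟩, hmemrad n hn⟩
  have hsub : Submodule.span K (F '' {n : ι | n ≠ n₀}) ≤ Submodule.restrictScalars K rad := by
    rw [Submodule.span_le]
    rintro y ⟨n, hn, rfl⟩
    exact hmemrad n hn
  refine ⟨?_, ?_, ?_, ?_, ?_⟩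
  · rw [hBF]
    exact hLI.linearIndepOn_id
  · rw [hBF]
    exact hspan
  · rintro b1 ⟨n, hn, rfl⟩ b2 ⟨m, hm, rfl⟩
    have hmul : (∏ i, (MonoidAlgebra.of K G (a i) - 1) ^ n i) *
        (∏ i, (MonoidAlgebra.of K G (a i) - 1) ^ m i) = P (fun i => n i + m i) := by
      rw [hP, ← Finset.prod_mul_distrib]
      simp only
      exact Finset.prod_congr rfl fun i _ => (pow_add _ _ _).symm
    rcases hP0 (fun i => n i + m i) with ⟨mm, hmm⟩ | h0
    · right
      rw [hmul, hmm]
      exact ⟨fun i => (mm i : ℕ), fun i => (mm i).2, rfl⟩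
    · left
      rw [hmul, h0]
  · rw [hBinter]
    have : F '' {n : ι | n ≠ n₀} ⊆ Set.range F := Set.image_subset_range _ _
    have h2 : LinearIndepOn K id (F '' {n : ι | n ≠ n₀}) := hLI.linearIndepOn_id.mono this
    exact h2
  · rw [hBinter]
    apply le_antisymm hsub
    intro z hz
    have hzrad : z ∈ rad := hz
    -- z is in the span of B = F '' {n ≠ n₀} ∪ {1}
    have hzB : z ∈ Submodule.span K (F '' {n : ι | n ≠ n₀} ∪ {(1 : A)}) := by
      have hcover : Set.range F ⊆ F '' {n : ι | n ≠ n₀} ∪ {(1 : A)} := by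
        rintro y ⟨n, rfl⟩
        by_cases h : n = n₀
        · right; rw [h, hF1]; rfl
        · left; exact ⟨n, h, rfl⟩
      have : S ≤ Submodule.span K (F '' {n : ι | n ≠ n₀} ∪ {(1 : A)}) :=
        Submodule.span_le.mpr (fun y hy => Submodule.subset_span (hcover hy))
      exact this (hspan ▸ Submodule.mem_top)
    rw [Submodule.span_union] at hzB
    obtain ⟨u, hu, v, hv, rfl⟩ := Submodule.mem_sup.mp hzB
    obtain ⟨c, rfl⟩ := Submodule.mem_span_singleton.mp hv
    have hurad : u ∈ rad := hsub hu
    have hcrad : c • (1 : A) ∈ Submodule.restrictScalars K rad := by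
      have : (u + c • (1 : A)) - u ∈ Submodule.restrictScalars K rad :=
        Submodule.sub_mem _ hzrad hurad
      simpa using this
    have hc0 : c = 0 := by
      by_contra hc
      apply hone_nrad
      have := (Submodule.restrictScalars K rad).smul_mem c⁻¹ hcrad
      rw [smul_smul, inv_mul_cancel₀ hc, one_smul] at this
      exact this
    rw [hc0, zero_smul, add_zero]
    exact hu
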